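/- Let G be a finite simple graph with at least four vertices, diameter two, and girth at most four, and suppose that for every edge e of G the graph G − e does not have diameter three. Then every edge of G lies on a triangle, i.e., w_G(e) = 3 for every edge e of G. -/

import Mathlib

open SimpleGraph

/-- `cycleWeight G e` is the minimum length of a cycle of `G` containing the edge `e`
(`⊤` if no cycle of `G` contains `e`). This is the weight function `w_G(e)`. -/
noncomputable def cycleWeight {V : Type*} (G : SimpleGraph V) (e : Sym2 V) : ℕ∞ :=
  ⨅ (u : V) (p : G.Walk u u) (_ : p.IsCycle ∧ e ∈ p.edges), (p.length : ℕ∞)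

section Helpers

variable {V : Type*} {G : SimpleGraph V}

private lemma cw_del_adj {p q x y : V} :
    (G.deleteEdges {s(p,q)}).Adj x y ↔ G.Adj x y ∧ ¬(x = p ∧ y = q) ∧ ¬(x = q ∧ y = p) := by
  simp only [deleteEdges_adj, Set.mem_singleton_iff, Sym2.eq_iff, not_or]

private lemma del_adj_of {p q x y : V} (h : G.Adj x y) (h1 : ¬(x = p ∧ y = q))
    (h2 : ¬(x = q ∧ y = p)) : (G.deleteEdges {s(p,q)}).Adj x y :=
  cw_del_adj.mpr ⟨h, h1, h2⟩

private lemma del_adj_dest {p q x y : V} (h : (G.deleteEdges {s(p,q)}).Adj x y) :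
    G.Adj x y ∧ ¬(x = p ∧ y = q) ∧ ¬(x = q ∧ y = p) := cw_del_adj.mp h

private lemma edist_le_one_of {H : SimpleGraph V} {x y : V} (h : H.Adj x y) :
    H.edist x y ≤ 1 := by
  simpa using H.edist_le (Walk.cons h Walk.nil)

private lemma edist_le_two_of {H : SimpleGraph V} {x y z : V} (h1 : H.Adj x z)
    (h2 : H.Adj z y) : H.edist x y ≤ 2 := by
  simpa using H.edist_le (Walk.cons h1 (Walk.cons h2 Walk.nil))

private lemma edist_le_three_of {H : SimpleGraph V} {x y z w : V} (h1 : H.Adj x z)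
    (h2 : H.Adj z w) (h3 : H.Adj w y) : H.edist x y ≤ 3 := by
  simpa using H.edist_le (Walk.cons h1 (Walk.cons h2 (Walk.cons h3 Walk.nil)))

private lemma walk_decomp2 {H : SimpleGraph V} {x y : V} (p : H.Walk x y) (h : p.length ≤ 2) :
    x = y ∨ H.Adj x y ∨ (∃ z, H.Adj x z ∧ H.Adj z y) := by
  match p with
  | .nil => exact Or.inl rfl
  | .cons h1 .nil => exact Or.inr (Or.inl h1)
  | .cons h1 (.cons h2 .nil) => exact Or.inr (Or.inr ⟨_, h1, h2⟩)
  | .cons h1 (.cons h2 (.cons h3 q)) => simp [Walk.length_cons] at h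

private lemma exists_of_edist_le_two {H : SimpleGraph V} {x y : V} (h : H.edist x y ≤ 2) :
    x = y ∨ H.Adj x y ∨ (∃ z, H.Adj x z ∧ H.Adj z y) := by
  have hne : H.edist x y ≠ ⊤ := fun ht => by rw [ht] at h; exact absurd h (by simp)
  obtain ⟨p, hp⟩ := exists_walk_of_edist_ne_top hne
  refine walk_decomp2 p ?_
  have : (p.length : ℕ∞) ≤ 2 := by rw [hp]; exact h
  exact_mod_cast this

private lemma three_le_edist_of {H : SimpleGraph V} {x y : V} (hne : x ≠ y)
    (hadj : ¬H.Adj x y) (hcomm : ∀ z, H.Adj x z → H.Adj z y → False) : 3 ≤ H.edist x y := by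
  have h2 : (2 : ℕ∞) < H.edist x y := by
    refine not_le.mp fun hle => ?_
    rcases exists_of_edist_le_two hle with rfl | h | ⟨z, h1, h2⟩
    · exact hne rfl
    · exact hadj h
    · exact hcomm z h1 h2
  have := Order.add_one_le_of_lt h2
  norm_num at this
  exact this

private lemma ediam_eq_three_aux {H : SimpleGraph V} (hub : ∀ x y, H.edist x y ≤ 3) {x y : V}
    (hlb : 3 ≤ H.edist x y) : H.ediam = 3 :=
  le_antisymm (ediam_le_of_edist_le hub) (le_trans hlb edist_le_ediam)

private lemma common_nbr (hd2 : ∀ x y, G.edist x y ≤ 2) {x y : V} (hne : x ≠ y)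
    (hnadj : ¬G.Adj x y) : ∃ z, G.Adj x z ∧ G.Adj z y := by
  rcases exists_of_edist_le_two (hd2 x y) with rfl | h | ⟨z, h1, h2⟩
  · exact absurd rfl hne
  · exact absurd h hnadj
  · exact ⟨z, h1, h2⟩

private lemma del_outer {p q : V} (hd2 : ∀ x y, G.edist x y ≤ 2) :
    ∀ x y, x ≠ p → x ≠ q → y ≠ p → y ≠ q → (G.deleteEdges {s(p,q)}).edist x y ≤ 2 := by
  intro x y hxp hxq hyp hyq
  rcases exists_of_edist_le_two (hd2 x y) with rfl | hadj | ⟨z, h1, h2⟩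
  · simp [SimpleGraph.edist_self]
  · exact (edist_le_one_of (del_adj_of hadj (fun h => hxp h.1) (fun h => hxq h.1))).trans
      one_le_two
  · exact edist_le_two_of (del_adj_of h1 (fun h => hxp h.1) (fun h => hxq h.1))
      (del_adj_of h2 (fun h => hyq h.2) (fun h => hyp h.2))

private lemma cycle_small {a : V} (w : G.Walk a a) (hc : w.IsCycle) (hl : w.length ≤ 4) :
    (∃ x y, G.Adj a x ∧ G.Adj x y ∧ G.Adj y a) ∨
    (∃ x y z, G.Adj a x ∧ G.Adj x y ∧ G.Adj y z ∧ G.Adj z a ∧ a ≠ y ∧ x ≠ z) := by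
  have h3 := hc.three_le_length
  match w with
  | .cons h1 (.cons h2 (.cons h3 .nil)) => exact Or.inl ⟨_, _, h1, h2, h3⟩
  | .cons h1 (.cons h2 (.cons h3 (.cons h4 .nil))) =>
      have hnd := hc.support_nodup
      simp [Walk.support_cons, List.nodup_cons] at hnd
      exact Or.inr ⟨_, _, _, h1, h2, h3, h4, by tauto, by tauto⟩
  | .cons h1 (.cons h2 (.cons h3 (.cons h4 (.cons h5 q)))) => simp [Walk.length_cons] at hl; omega

end Helpers

section Stages

variable {V : Type*} {G : SimpleGraph V}

private lemma stage_bridge (hd2 : ∀ x y, G.edist x y ≤ 2)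
    (hdel : ∀ e ∈ G.edgeSet, (G.deleteEdges {e}).ediam ≠ 3)
    {u v x y : V} (huv : G.Adj u v) (hA : ∀ z, G.Adj u z → z = v) (hxy : G.Adj x y)
    (hxu : x ≠ u) (hxv : x ≠ v) (hyu : y ≠ u) (hyv : y ≠ v) : False := by
  have hallv : ∀ z, z ≠ u → z ≠ v → G.Adj v z := by
    intro z hzu hzv
    have hnadj : ¬ G.Adj u z := fun h => hzv (hA z h)
    obtain ⟨m, hum, hmz⟩ := common_nbr hd2 (Ne.symm hzu) hnadj
    exact (hA m hum) ▸ hmz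
  have hvx : G.Adj v x := hallv x hxu hxv
  have hz1 : ∀ z, z ≠ x → z ≠ v → (G.deleteEdges {s(v,x)}).Adj v z := by
    intro z hzx hzv
    rcases eq_or_ne z u with rfl | hzu
    · exact del_adj_of huv.symm (fun h => hzx h.2) (fun h => hzv h.2)
    · exact del_adj_of (hallv z hzu hzv) (fun h => hzx h.2) (fun h => hzv h.2)
  have hvy : (G.deleteEdges {s(v,x)}).Adj v y := hz1 y hxy.ne' hyv
  have hyx : (G.deleteEdges {s(v,x)}).Adj y x :=
    del_adj_of hxy.symm (fun h => hyv h.1) (fun h => hxv h.2)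
  have hvx2 : (G.deleteEdges {s(v,x)}).edist v x ≤ 2 := edist_le_two_of hvy hyx
  have hv1 : ∀ z, z ≠ x → (G.deleteEdges {s(v,x)}).edist v z ≤ 1 := by
    intro z hzx
    rcases eq_or_ne z v with rfl | hzv
    · simp [SimpleGraph.edist_self]
    · exact edist_le_one_of (hz1 z hzx hzv)
  have hvq : ∀ q, (G.deleteEdges {s(v,x)}).edist v q ≤ 2 := by
    intro q
    rcases eq_or_ne q x with rfl | hqx
    · exact hvx2
    · exact (hv1 q hqx).trans one_le_two
  have hub : ∀ p q, (G.deleteEdges {s(v,x)}).edist p q ≤ 3 := by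
    intro p q
    rcases eq_or_ne p x with hpx | hpx
    · rw [hpx]
      rcases eq_or_ne q x with hqx | hqx
      · rw [hqx]; simp [SimpleGraph.edist_self]
      · calc (G.deleteEdges {s(v,x)}).edist x q
            ≤ (G.deleteEdges {s(v,x)}).edist x v + (G.deleteEdges {s(v,x)}).edist v q :=
              SimpleGraph.edist_triangle
          _ ≤ 2 + 1 := add_le_add (SimpleGraph.edist_comm ▸ hvx2) (hv1 q hqx)
          _ ≤ 3 := by norm_num
    · calc (G.deleteEdges {s(v,x)}).edist p q
          ≤ (G.deleteEdges {s(v,x)}).edist p v + (G.deleteEdges {s(v,x)}).edist v q :=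
            SimpleGraph.edist_triangle
        _ ≤ 1 + 2 := add_le_add (SimpleGraph.edist_comm ▸ hv1 p hpx) (hvq q)
        _ ≤ 3 := by norm_num
  have hlb : 3 ≤ (G.deleteEdges {s(v,x)}).edist u x := by
    refine three_le_edist_of (Ne.symm hxu) (fun h => hxv (hA x (del_adj_dest h).1)) ?_
    intro z h1 h2
    have hz : z = v := hA z (del_adj_dest h1).1
    subst hz
    exact (del_adj_dest h2).2.1 ⟨rfl, rfl⟩
  exact hdel _ (G.mem_edgeSet.mpr hvx) (ediam_eq_three_aux hub hlb)

private lemma stage1 (hd2 : ∀ x y, G.edist x y ≤ 2)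
    (hdel : ∀ e ∈ G.edgeSet, (G.deleteEdges {e}).ediam ≠ 3)
    {u v a b : V} (huv : G.Adj u v) (hnc : ∀ z, G.Adj u z → G.Adj z v → False)
    (hua : G.Adj u a) (hav : a ≠ v) (hvb : G.Adj v b) (hbu : b ≠ u) (hab : G.Adj a b) :
    False := by
  have hau : a ≠ u := hua.ne'
  have hbv : b ≠ v := hvb.ne'
  have houter := del_outer (G := G) (p := u) (q := v) hd2
  have hHua : (G.deleteEdges {s(u,v)}).Adj u a :=
    del_adj_of hua (fun h => hav h.2) (fun h => huv.ne h.1)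
  have hHvb : (G.deleteEdges {s(u,v)}).Adj v b :=
    del_adj_of hvb (fun h => huv.ne h.1.symm) (fun h => hbu h.2)
  have hHab : (G.deleteEdges {s(u,v)}).Adj a b :=
    del_adj_of hab (fun h => hau h.1) (fun h => hav h.1)
  have hu3 : ∀ y, (G.deleteEdges {s(u,v)}).edist u y ≤ 3 := by
    intro y
    rcases eq_or_ne y u with rfl | hyu
    · simp [SimpleGraph.edist_self]
    rcases eq_or_ne y v with rfl | hyv
    · exact edist_le_three_of hHua hHab hHvb.symm
    · calc (G.deleteEdges {s(u,v)}).edist u y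
          ≤ (G.deleteEdges {s(u,v)}).edist u a + (G.deleteEdges {s(u,v)}).edist a y :=
            SimpleGraph.edist_triangle
        _ ≤ 1 + 2 := add_le_add (edist_le_one_of hHua) (houter a y hau hav hyu hyv)
        _ ≤ 3 := by norm_num
  have hv3 : ∀ y, (G.deleteEdges {s(u,v)}).edist v y ≤ 3 := by
    intro y
    rcases eq_or_ne y v with rfl | hyv
    · simp [SimpleGraph.edist_self]
    rcases eq_or_ne y u with rfl | hyu
    · exact edist_le_three_of hHvb hHab.symm hHua.symm
    · calc (G.deleteEdges {s(u,v)}).edist v y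
          ≤ (G.deleteEdges {s(u,v)}).edist v b + (G.deleteEdges {s(u,v)}).edist b y :=
            SimpleGraph.edist_triangle
        _ ≤ 1 + 2 := add_le_add (edist_le_one_of hHvb) (houter b y hbu hbv hyu hyv)
        _ ≤ 3 := by norm_num
  have hub : ∀ x y, (G.deleteEdges {s(u,v)}).edist x y ≤ 3 := by
    intro x y
    rcases eq_or_ne x u with rfl | hxu
    · exact hu3 y
    rcases eq_or_ne x v with rfl | hxv
    · exact hv3 y
    rcases eq_or_ne y u with rfl | hyu
    · rw [SimpleGraph.edist_comm]; exact hu3 x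
    rcases eq_or_ne y v with rfl | hyv
    · rw [SimpleGraph.edist_comm]; exact hv3 x
    · exact (houter x y hxu hxv hyu hyv).trans (by norm_num)
  have hlb : 3 ≤ (G.deleteEdges {s(u,v)}).edist u v :=
    three_le_edist_of huv.ne (fun h => (del_adj_dest h).2.1 ⟨rfl, rfl⟩)
      (fun z h1 h2 => hnc z (del_adj_dest h1).1 (del_adj_dest h2).1)
  exact hdel _ (G.mem_edgeSet.mpr huv) (ediam_eq_three_aux hub hlb)

end Stages

section Stage2

variable {V : Type*} {G : SimpleGraph V}

private lemma stage2 (hd2 : ∀ x y, G.edist x y ≤ 2)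
    (hdel : ∀ e ∈ G.edgeSet, (G.deleteEdges {e}).ediam ≠ 3)
    {u v a b0 : V} (huv : G.Adj u v) (hnc : ∀ z, G.Adj u z → G.Adj z v → False)
    (hC1 : ∀ a' b', G.Adj u a' → a' ≠ v → G.Adj v b' → b' ≠ u → G.Adj a' b' → False)
    (hua : G.Adj u a) (hav : a ≠ v) (hvb0 : G.Adj v b0) (hb0u : b0 ≠ u) :
    ¬ ((G.deleteEdges {s(u,a)}).edist u a ≤ 3) := by
  intro h3
  have hau : a ≠ u := hua.ne'
  have hb0v : b0 ≠ v := hvb0.ne'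
  have hnav : ¬ G.Adj a v := fun h => hnc a hua h
  have hnub0 : ¬ G.Adj u b0 := fun h => hnc b0 h hvb0.symm
  have houter := del_outer (G := G) (p := u) (q := a) hd2
  have hHuv : (G.deleteEdges {s(u,a)}).Adj u v :=
    del_adj_of huv (fun h => hav h.2.symm) (fun h => hau h.1.symm)
  have hu3 : ∀ y, (G.deleteEdges {s(u,a)}).edist u y ≤ 3 := by
    intro y
    rcases eq_or_ne y u with hyu | hyu
    · rw [hyu]; simp [SimpleGraph.edist_self]
    rcases eq_or_ne y a with hya | hya
    · rw [hya]; exact h3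
    rcases eq_or_ne y v with hyv | hyv
    · rw [hyv]; exact (edist_le_one_of hHuv).trans (by norm_num)
    by_cases hGuy : G.Adj u y
    · exact (edist_le_one_of (del_adj_of hGuy (fun h => hya h.2) (fun h => hau h.1.symm))).trans
        (by norm_num)
    by_cases hcz : ∃ z, z ≠ a ∧ G.Adj u z ∧ G.Adj z y
    · obtain ⟨z, hza, h1, h2⟩ := hcz
      exact (edist_le_two_of (del_adj_of h1 (fun h => hza h.2) (fun h => hau h.1.symm))
        (del_adj_of h2 (fun h => hya h.2) (fun h => hza h.1))).trans (by norm_num)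
    · have hnvy : ¬ G.Adj v y := fun h => hcz ⟨v, fun hh => hav hh.symm, huv, h⟩
      obtain ⟨bz, hb1, hb2⟩ := common_nbr hd2 (Ne.symm hyv) hnvy
      have hbzu : bz ≠ u := fun h => hGuy (h ▸ hb2)
      exact (edist_le_three_of hHuv
        (del_adj_of hb1 (fun h => huv.ne h.1.symm) (fun h => hav h.1.symm))
        (del_adj_of hb2 (fun h => hbzu h.1) (fun h => hyu h.2))).trans (by norm_num)
  have ha3 : ∀ y, (G.deleteEdges {s(u,a)}).edist a y ≤ 3 := by
    intro y
    rcases eq_or_ne y a with hya | hya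
    · rw [hya]; simp [SimpleGraph.edist_self]
    rcases eq_or_ne y u with hyu | hyu
    · rw [hyu, SimpleGraph.edist_comm]; exact h3
    rcases eq_or_ne y v with hyv | hyv
    · have hanb0 : a ≠ b0 := fun h => hnav (h ▸ hvb0.symm)
      have hnab0 : ¬ G.Adj a b0 := hC1 a b0 hua hav hvb0 hb0u
      obtain ⟨r, hr1, hr2⟩ := common_nbr hd2 hanb0 hnab0
      have hru : r ≠ u := fun h => hnub0 (h ▸ hr2)
      rw [hyv]
      exact edist_le_three_of (del_adj_of hr1 (fun h => hau h.1) (fun h => hru h.2))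
        (del_adj_of hr2 (fun h => hru h.1) (fun h => hb0u h.2))
        (del_adj_of hvb0.symm (fun h => hb0u h.1) (fun h => huv.ne h.2.symm)) |>.trans le_rfl
    by_cases hGay : G.Adj a y
    · exact (edist_le_one_of (del_adj_of hGay (fun h => hau h.1) (fun h => hyu h.2))).trans
        (by norm_num)
    by_cases hcz : ∃ z, z ≠ u ∧ G.Adj a z ∧ G.Adj z y
    · obtain ⟨z, hzu, h1, h2⟩ := hcz
      exact (edist_le_two_of (del_adj_of h1 (fun h => hau h.1) (fun h => hzu h.2))
        (del_adj_of h2 (fun h => hzu h.1) (fun h => hyu h.2))).trans (by norm_num)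
    · obtain ⟨m, hm1, hm2⟩ := common_nbr hd2 (Ne.symm hya) hGay
      have hmu : m = u := by
        by_contra hne
        exact hcz ⟨m, hne, hm1, hm2⟩
      have hGuy : G.Adj u y := hmu ▸ hm2
      have hyb0 : y ≠ b0 := fun h => hnc y hGuy (h.symm ▸ hvb0.symm)
      have hnyb0 : ¬ G.Adj y b0 := hC1 y b0 hGuy hyv hvb0 hb0u
      obtain ⟨r', hr1', hr2'⟩ := common_nbr hd2 hyb0 hnyb0
      have hr'u : r' ≠ u := fun h => hnub0 (h ▸ hr2')
      have hr'a : r' ≠ a := fun h => hGay ((h ▸ hr1') : G.Adj y a).symm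
      have hr'v : r' ≠ v := fun hh => hnc y hGuy (hh ▸ hr1')
      have hnur' : ¬ G.Adj u r' := fun h => hC1 r' b0 h hr'v hvb0 hb0u hr2'
      have har2 : (G.deleteEdges {s(u,a)}).edist a r' ≤ 2 := by
        by_cases hGar : G.Adj a r'
        · exact (edist_le_one_of (del_adj_of hGar (fun h => hau h.1)
            (fun h => hr'u h.2))).trans one_le_two
        · obtain ⟨w, hw1, hw2⟩ := common_nbr hd2 (Ne.symm hr'a) hGar
          have hwu : w ≠ u := fun h => hnur' (h ▸ hw2)
          exact edist_le_two_of (del_adj_of hw1 (fun h => hau h.1) (fun h => hwu h.2))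
            (del_adj_of hw2 (fun h => hwu h.1) (fun h => hr'u h.2))
      calc (G.deleteEdges {s(u,a)}).edist a y
          ≤ (G.deleteEdges {s(u,a)}).edist a r' + (G.deleteEdges {s(u,a)}).edist r' y :=
            SimpleGraph.edist_triangle
        _ ≤ 2 + 1 := add_le_add har2 (edist_le_one_of
            (del_adj_of hr1'.symm (fun h => hr'u h.1) (fun h => hr'a h.1)))
        _ ≤ 3 := by norm_num
  have hub : ∀ x y, (G.deleteEdges {s(u,a)}).edist x y ≤ 3 := by
    intro x y
    rcases eq_or_ne x u with hxu | hxu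
    · rw [hxu]; exact hu3 y
    rcases eq_or_ne x a with hxa | hxa
    · rw [hxa]; exact ha3 y
    rcases eq_or_ne y u with hyu | hyu
    · rw [hyu, SimpleGraph.edist_comm]; exact hu3 x
    rcases eq_or_ne y a with hya | hya
    · rw [hya, SimpleGraph.edist_comm]; exact ha3 x
    · exact (houter x y hxu hxa hyu hya).trans (by norm_num)
  have hlb : 3 ≤ (G.deleteEdges {s(u,a)}).edist a v :=
    three_le_edist_of hav (fun h => hnav (del_adj_dest h).1)
      (fun z h1 h2 => hC1 a z hua hav ((del_adj_dest h2).1.symm)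
        (fun hh => (del_adj_dest h1).2.2 ⟨rfl, hh⟩) (del_adj_dest h1).1)
  exact hdel _ (G.mem_edgeSet.mpr hua) (ediam_eq_three_aux hub hlb)

end Stage2

section Stage3

variable {V : Type*} {G : SimpleGraph V}

private lemma stage3 (hd2 : ∀ x y, G.edist x y ≤ 2)
    (hdel : ∀ e ∈ G.edgeSet, (G.deleteEdges {e}).ediam ≠ 3)
    {u v a r : V} (huv : G.Adj u v) (hnc : ∀ z, G.Adj u z → G.Adj z v → False)
    (hC1 : ∀ a' b', G.Adj u a' → a' ≠ v → G.Adj v b' → b' ≠ u → G.Adj a' b' → False)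
    (hC5 : ∀ a₁ a₂ z, G.Adj u a₁ → a₁ ≠ v → G.Adj u a₂ → a₂ ≠ v → a₁ ≠ a₂ →
      G.Adj z a₁ → G.Adj z a₂ → z = u)
    (hua : G.Adj u a) (hav : a ≠ v) (har : G.Adj a r)
    (hru : ¬ G.Adj u r) (hrv : ¬ G.Adj v r) (hrnu : r ≠ u) (hrnv : r ≠ v) :
    ¬ ((G.deleteEdges {s(a,r)}).edist a r ≤ 3) := by
  intro h3
  have hau : a ≠ u := hua.ne'
  have har' : a ≠ r := har.ne
  have hnav : ¬ G.Adj a v := fun h => hnc a hua h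
  obtain ⟨b, hvb, hbr⟩ := common_nbr hd2 (Ne.symm hrnv) hrv
  have hbu : b ≠ u := fun h => hru (h ▸ hbr)
  have hba : b ≠ a := fun h => hnav ((h ▸ hvb) : G.Adj v a).symm
  have hbv : b ≠ v := hvb.ne'
  have hbr' : b ≠ r := hbr.ne
  have houter := del_outer (G := G) (p := a) (q := r) hd2
  have hHau : (G.deleteEdges {s(a,r)}).Adj a u :=
    del_adj_of hua.symm (fun h => hrnu h.2.symm) (fun h => har' h.1)
  have hHuv : (G.deleteEdges {s(a,r)}).Adj u v :=
    del_adj_of huv (fun h => hau h.1.symm) (fun h => hrnu h.1.symm)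
  have hHrb : (G.deleteEdges {s(a,r)}).Adj r b :=
    del_adj_of hbr.symm (fun h => har' h.1.symm) (fun h => hba h.2)
  have hHbv : (G.deleteEdges {s(a,r)}).Adj b v :=
    del_adj_of hvb.symm (fun h => hba h.1) (fun h => hbr' h.1)
  have ha3 : ∀ y, (G.deleteEdges {s(a,r)}).edist a y ≤ 3 := by
    intro y
    rcases eq_or_ne y a with hya | hya
    · rw [hya]; simp [SimpleGraph.edist_self]
    rcases eq_or_ne y r with hyr | hyr
    · rw [hyr]; exact h3
    rcases eq_or_ne y u with hyu | hyu
    · rw [hyu]; exact (edist_le_one_of hHau).trans (by norm_num)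
    rcases eq_or_ne y v with hyv | hyv
    · rw [hyv]; exact (edist_le_two_of hHau hHuv).trans (by norm_num)
    by_cases hGay : G.Adj a y
    · exact (edist_le_one_of (del_adj_of hGay (fun h => hyr h.2) (fun h => har' h.1))).trans
        (by norm_num)
    by_cases hcz : ∃ z, z ≠ r ∧ G.Adj a z ∧ G.Adj z y
    · obtain ⟨z, hzr, h1, h2⟩ := hcz
      exact (edist_le_two_of (del_adj_of h1 (fun h => hzr h.2) (fun h => har' h.1))
        (del_adj_of h2 (fun h => hyr h.2) (fun h => hzr h.1))).trans (by norm_num)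
    · have hnuy : ¬ G.Adj u y := fun h => hcz ⟨u, Ne.symm hrnu, hua.symm, h⟩
      by_cases hGvy : G.Adj v y
      · exact edist_le_three_of hHau hHuv
          (del_adj_of hGvy (fun h => hav h.1.symm) (fun h => hrnv h.1.symm))
      · obtain ⟨m, hum, hmy⟩ := common_nbr hd2 (Ne.symm hyu) hnuy
        have hma : m ≠ a := fun h => hGay (h ▸ hmy)
        exact edist_le_three_of hHau
          (del_adj_of hum (fun h => hau h.1.symm) (fun h => hrnu h.1.symm))
          (del_adj_of hmy (fun h => hma h.1) (fun h => hya h.2))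
  have hr3 : ∀ y, (G.deleteEdges {s(a,r)}).edist r y ≤ 3 := by
    intro y
    rcases eq_or_ne y r with hyr | hyr
    · rw [hyr]; simp [SimpleGraph.edist_self]
    rcases eq_or_ne y a with hya | hya
    · rw [hya, SimpleGraph.edist_comm]; exact h3
    rcases eq_or_ne y u with hyu | hyu
    · rw [hyu]; exact edist_le_three_of hHrb hHbv (hHuv.symm)
    rcases eq_or_ne y v with hyv | hyv
    · rw [hyv]; exact (edist_le_two_of hHrb hHbv).trans (by norm_num)
    by_cases hGry : G.Adj r y
    · exact (edist_le_one_of (del_adj_of hGry (fun h => har' h.1.symm) (fun h => hya h.2))).trans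
        (by norm_num)
    by_cases hcz : ∃ z, z ≠ a ∧ G.Adj r z ∧ G.Adj z y
    · obtain ⟨z, hza, h1, h2⟩ := hcz
      exact (edist_le_two_of (del_adj_of h1 (fun h => har' h.1.symm) (fun h => hza h.2))
        (del_adj_of h2 (fun h => hza h.1) (fun h => hya h.2))).trans (by norm_num)
    · have hnby : ¬ G.Adj b y := fun h => hcz ⟨b, hba, hbr.symm, h⟩
      have hbyne : b ≠ y := fun h => hGry ((h ▸ hbr) : G.Adj y r).symm
      obtain ⟨w, hw1, hw2⟩ := common_nbr hd2 hbyne hnby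
      exact edist_le_three_of hHrb
        (del_adj_of hw1 (fun h => hba h.1) (fun h => hbr' h.1))
        (del_adj_of hw2 (fun h => hyr h.2) (fun h => hya h.2))
  have hub : ∀ x y, (G.deleteEdges {s(a,r)}).edist x y ≤ 3 := by
    intro x y
    rcases eq_or_ne x a with hxa | hxa
    · rw [hxa]; exact ha3 y
    rcases eq_or_ne x r with hxr | hxr
    · rw [hxr]; exact hr3 y
    rcases eq_or_ne y a with hya | hya
    · rw [hya, SimpleGraph.edist_comm]; exact ha3 x
    rcases eq_or_ne y r with hyr | hyr
    · rw [hyr, SimpleGraph.edist_comm]; exact hr3 x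
    · exact (houter x y hxa hxr hya hyr).trans (by norm_num)
  have hlb : 3 ≤ (G.deleteEdges {s(a,r)}).edist r u := by
    refine three_le_edist_of hrnu (fun h => hru ((del_adj_dest h).1.symm)) ?_
    intro z h1 h2
    have hGrz : G.Adj r z := (del_adj_dest h1).1
    have hza : z ≠ a := fun hh => (del_adj_dest h1).2.2 ⟨rfl, hh⟩
    have hzv : z ≠ v := fun hh => hrv ((hh ▸ hGrz) : G.Adj r v).symm
    exact hrnu (hC5 a z r hua hav ((del_adj_dest h2).1.symm) hzv (Ne.symm hza) har.symm hGrz)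
  exact hdel _ (G.mem_edgeSet.mpr har) (ediam_eq_three_aux hub hlb)

private lemma stage_final (hd2 : ∀ x y, G.edist x y ≤ 2)
    (hdel : ∀ e ∈ G.edgeSet, (G.deleteEdges {e}).ediam ≠ 3)
    {r1 r2 w1 w2 x0 y0 : V} (h12 : G.Adj r1 r2)
    (hw1 : G.Adj r1 w1) (hw1n : w1 ≠ r2) (hw2 : G.Adj r2 w2) (hw2n : w2 ≠ r1)
    (h3 : (G.deleteEdges {s(r1,r2)}).edist r1 r2 ≤ 3)
    (hlb : 3 ≤ (G.deleteEdges {s(r1,r2)}).edist x0 y0) : False := by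
  have houter := del_outer (G := G) (p := r1) (q := r2) hd2
  have hH1 : (G.deleteEdges {s(r1,r2)}).Adj r1 w1 :=
    del_adj_of hw1 (fun h => hw1n h.2) (fun h => h12.ne h.1)
  have hH2 : (G.deleteEdges {s(r1,r2)}).Adj r2 w2 :=
    del_adj_of hw2 (fun h => h12.ne h.1.symm) (fun h => hw2n h.2)
  have h1y : ∀ y, (G.deleteEdges {s(r1,r2)}).edist r1 y ≤ 3 := by
    intro y
    rcases eq_or_ne y r1 with hy1 | hy1
    · rw [hy1]; simp [SimpleGraph.edist_self]
    rcases eq_or_ne y r2 with hy2 | hy2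
    · rw [hy2]; exact h3
    · calc (G.deleteEdges {s(r1,r2)}).edist r1 y
          ≤ (G.deleteEdges {s(r1,r2)}).edist r1 w1 + (G.deleteEdges {s(r1,r2)}).edist w1 y :=
            SimpleGraph.edist_triangle
        _ ≤ 1 + 2 := add_le_add (edist_le_one_of hH1) (houter w1 y hw1.ne' hw1n hy1 hy2)
        _ ≤ 3 := by norm_num
  have h2y : ∀ y, (G.deleteEdges {s(r1,r2)}).edist r2 y ≤ 3 := by
    intro y
    rcases eq_or_ne y r2 with hy2 | hy2
    · rw [hy2]; simp [SimpleGraph.edist_self]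
    rcases eq_or_ne y r1 with hy1 | hy1
    · rw [hy1, SimpleGraph.edist_comm]; exact h3
    · calc (G.deleteEdges {s(r1,r2)}).edist r2 y
          ≤ (G.deleteEdges {s(r1,r2)}).edist r2 w2 + (G.deleteEdges {s(r1,r2)}).edist w2 y :=
            SimpleGraph.edist_triangle
        _ ≤ 1 + 2 := add_le_add (edist_le_one_of hH2) (houter w2 y hw2n hw2.ne' hy1 hy2)
        _ ≤ 3 := by norm_num
  have hub : ∀ x y, (G.deleteEdges {s(r1,r2)}).edist x y ≤ 3 := by
    intro x y
    rcases eq_or_ne x r1 with hx1 | hx1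
    · rw [hx1]; exact h1y y
    rcases eq_or_ne x r2 with hx2 | hx2
    · rw [hx2]; exact h2y y
    rcases eq_or_ne y r1 with hy1 | hy1
    · rw [hy1, SimpleGraph.edist_comm]; exact h1y x
    rcases eq_or_ne y r2 with hy2 | hy2
    · rw [hy2, SimpleGraph.edist_comm]; exact h2y x
    · exact (houter x y hx1 hx2 hy1 hy2).trans (by norm_num)
  exact hdel _ (G.mem_edgeSet.mpr h12) (ediam_eq_three_aux hub hlb)

end Stage3

section Key

variable {V : Type*} {G : SimpleGraph V}

private lemma tri_ne {u v : V} (hnc : ∀ z, G.Adj u z → G.Adj z v → False)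
    (hC4 : ∀ a a', G.Adj u a → a ≠ v → G.Adj u a' → a' ≠ v → G.Adj a a' → False)
    {x y z : V} (h1 : G.Adj x y) (h2 : G.Adj y z) (h3 : G.Adj x z) : x ≠ u := by
  intro hx; subst hx
  by_cases hyv : y = v
  · exact hnc z h3 ((hyv ▸ h2 : G.Adj v z)).symm
  · by_cases hzv : z = v
    · exact hnc y h1 (hzv ▸ h2)
    · exact hC4 y z h1 hyv h3 hzv h2

private lemma tri_nadj {u v : V}
    (hC1 : ∀ a b, G.Adj u a → a ≠ v → G.Adj v b → b ≠ u → G.Adj a b → False)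
    (hC4 : ∀ a a', G.Adj u a → a ≠ v → G.Adj u a' → a' ≠ v → G.Adj a a' → False)
    (hC7a : ∀ a r, G.Adj u a → a ≠ v → G.Adj a r → ¬G.Adj u r → ¬G.Adj v r → r ≠ u → r ≠ v →
      ∀ z, G.Adj z a → G.Adj z r → False)
    {x y z : V} (h1 : G.Adj x y) (h2 : G.Adj y z) (h3 : G.Adj x z)
    (hxv : x ≠ v) (hyu : y ≠ u) (hyv : y ≠ v) : ¬ G.Adj u x := by
  intro hux
  have hy_nu : ¬G.Adj u y := fun h => hC4 x y hux hxv h hyv h1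
  have hy_nv : ¬G.Adj v y := fun h => hC1 x y hux hxv h hyu h1
  exact hC7a x y hux hxv h1 hy_nu hy_nv hyu hyv z h3.symm h2.symm

private lemma edge_avoiding {u v c0 : V} (hA' : ∀ z, G.Adj u z → z = v)
    (hcyc : (∃ x y, G.Adj c0 x ∧ G.Adj x y ∧ G.Adj y c0) ∨
      (∃ x y z, G.Adj c0 x ∧ G.Adj x y ∧ G.Adj y z ∧ G.Adj z c0 ∧ c0 ≠ y ∧ x ≠ z)) :
    ∃ x y, G.Adj x y ∧ x ≠ u ∧ x ≠ v ∧ y ≠ u ∧ y ≠ v := by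
  rcases hcyc with ⟨x, y, h1, h2, h3⟩ | ⟨x, y, z, h1, h2, h3, h4, hc0y, hxz⟩
  · have hc0u : c0 ≠ u := by
      intro h; subst h
      exact h2.ne ((hA' x h1).trans (hA' y h3.symm).symm)
    have hxu : x ≠ u := by
      intro h; subst h
      exact h3.ne ((hA' y h2).trans (hA' c0 h1.symm).symm)
    have hyu : y ≠ u := by
      intro h; subst h
      exact h1.ne ((hA' c0 h3).trans (hA' x h2.symm).symm)
    by_cases hc0v : c0 = v
    · exact ⟨x, y, h2, hxu, fun h => h1.ne' (h.trans hc0v.symm), hyu,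
        fun h => h3.ne (h.trans hc0v.symm)⟩
    by_cases hxv : x = v
    · exact ⟨y, c0, h3, hyu, fun h => h2.ne' (h.trans hxv.symm), hc0u,
        fun h => h1.ne (h.trans hxv.symm)⟩
    by_cases hyv : y = v
    · exact ⟨c0, x, h1, hc0u, fun h => h3.ne' (h.trans hyv.symm), hxu,
        fun h => h2.ne (h.trans hyv.symm)⟩
    · exact ⟨x, y, h2, hxu, hxv, hyu, hyv⟩
  · have hc0u : c0 ≠ u := by
      intro h; subst h
      exact hxz ((hA' x h1).trans (hA' z h4.symm).symm)
    have hxu : x ≠ u := by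
      intro h; subst h
      exact hc0y ((hA' c0 h1.symm).trans (hA' y h2).symm)
    have hyu : y ≠ u := by
      intro h; subst h
      exact hxz ((hA' x h2.symm).trans (hA' z h3).symm)
    have hzu : z ≠ u := by
      intro h; subst h
      exact hc0y ((hA' c0 h4).trans (hA' y h3.symm).symm)
    by_cases hc0v : c0 = v
    · exact ⟨x, y, h2, hxu, fun h => h1.ne' (h.trans hc0v.symm), hyu,
        fun h => hc0y (hc0v.trans h.symm)⟩
    by_cases hxv : x = v
    · exact ⟨y, z, h3, hyu, fun h => h2.ne' (h.trans hxv.symm), hzu,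
        fun h => hxz (hxv.trans h.symm)⟩
    by_cases hyv : y = v
    · exact ⟨z, c0, h4, hzu, fun h => h3.ne' (h.trans hyv.symm), hc0u,
        fun h => hc0y (h.trans hyv.symm)⟩
    by_cases hzv : z = v
    · exact ⟨c0, x, h1, hc0u, hc0v, hxu, fun h => hxz (h.trans hzv.symm)⟩
    · exact ⟨x, y, h2, hxu, hxv, hyu, hyv⟩

private lemma key_common (hd2 : ∀ x y, G.edist x y ≤ 2) (hgirth : G.egirth ≤ 4)
    (hdel : ∀ e ∈ G.edgeSet, (G.deleteEdges {e}).ediam ≠ 3)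
    {u v : V} (huv : G.Adj u v) : ∃ z, G.Adj u z ∧ G.Adj v z := by
  by_contra hno
  push_neg at hno
  have hnc : ∀ z, G.Adj u z → G.Adj z v → False := fun z h1 h2 => hno z h1 h2.symm
  have hncv : ∀ z, G.Adj v z → G.Adj z u → False := fun z h1 h2 => hno z h2.symm h1
  have hnac : ¬ G.IsAcyclic := by
    intro hac
    rw [hac.egirth_eq_top] at hgirth
    exact absurd hgirth (by simp)
  obtain ⟨c0, w, hwc, hwl⟩ := SimpleGraph.exists_egirth_eq_length.mpr hnac
  have hlen : w.length ≤ 4 := by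
    have h4 : (w.length : ℕ∞) ≤ 4 := hwl ▸ hgirth
    exact_mod_cast h4
  have hcyc := cycle_small w hwc hlen
  by_cases hA : ∃ a, G.Adj u a ∧ a ≠ v
  · by_cases hB : ∃ b, G.Adj v b ∧ b ≠ u
    · obtain ⟨a0, hua0, ha0v⟩ := hA
      obtain ⟨b0, hvb0, hb0u⟩ := hB
      have hC1 : ∀ a b, G.Adj u a → a ≠ v → G.Adj v b → b ≠ u → G.Adj a b → False :=
        fun a b h1 h2 h3 h4 h5 => stage1 hd2 hdel huv hnc h1 h2 h3 h4 h5
      have hC1' : ∀ b a, G.Adj v b → b ≠ u → G.Adj u a → a ≠ v → G.Adj b a → False :=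
        fun b a h1 h2 h3 h4 h5 => hC1 a b h3 h4 h1 h2 h5.symm
      have hF2 : ∀ a, G.Adj u a → a ≠ v → ¬ ((G.deleteEdges {s(u,a)}).edist u a ≤ 3) :=
        fun a h1 h2 => stage2 hd2 hdel huv hnc hC1 h1 h2 hvb0 hb0u
      have hF2' : ∀ b, G.Adj v b → b ≠ u → ¬ ((G.deleteEdges {s(v,b)}).edist v b ≤ 3) :=
        fun b h1 h2 => stage2 hd2 hdel huv.symm hncv hC1' h1 h2 hua0 ha0v
      have hC4 : ∀ a a', G.Adj u a → a ≠ v → G.Adj u a' → a' ≠ v → G.Adj a a' → False := by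
        intro a a' h1 h2 h3 h4 h5
        refine hF2 a h1 h2 ((edist_le_two_of
          (del_adj_of h3 (fun h => h5.ne' h.2) (fun h => h1.ne h.1))
          (del_adj_of h5.symm (fun h => h3.ne' h.1) (fun h => h5.ne' h.1))).trans (by norm_num))
      have hC5 : ∀ a a' z, G.Adj u a → a ≠ v → G.Adj u a' → a' ≠ v → a ≠ a' →
          G.Adj z a → G.Adj z a' → z = u := by
        intro a a' z h1 h2 h3 h4 hne hz1 hz2
        by_contra hzu
        refine hF2 a h1 h2 (edist_le_three_of
          (del_adj_of h3 (fun h => hne h.2.symm) (fun h => h1.ne h.1))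
          (del_adj_of hz2.symm (fun h => h3.ne' h.1) (fun h => hne h.1.symm))
          (del_adj_of hz1 (fun h => hzu h.1) (fun h => hz1.ne h.1)))
      have hC4' : ∀ b b', G.Adj v b → b ≠ u → G.Adj v b' → b' ≠ u → G.Adj b b' → False := by
        intro b b' h1 h2 h3 h4 h5
        refine hF2' b h1 h2 ((edist_le_two_of
          (del_adj_of h3 (fun h => h5.ne' h.2) (fun h => h1.ne h.1))
          (del_adj_of h5.symm (fun h => h3.ne' h.1) (fun h => h5.ne' h.1))).trans (by norm_num))
      have hC5' : ∀ b b' z, G.Adj v b → b ≠ u → G.Adj v b' → b' ≠ u → b ≠ b' →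
          G.Adj z b → G.Adj z b' → z = v := by
        intro b b' z h1 h2 h3 h4 hne hz1 hz2
        by_contra hzv
        refine hF2' b h1 h2 (edist_le_three_of
          (del_adj_of h3 (fun h => hne h.2.symm) (fun h => h1.ne h.1))
          (del_adj_of hz2.symm (fun h => h3.ne' h.1) (fun h => hne h.1.symm))
          (del_adj_of hz1 (fun h => hzv h.1) (fun h => hz1.ne h.1)))
      have hF3 : ∀ a r, G.Adj u a → a ≠ v → G.Adj a r → ¬G.Adj u r → ¬G.Adj v r →
          r ≠ u → r ≠ v → ¬ ((G.deleteEdges {s(a,r)}).edist a r ≤ 3) :=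
        fun a r h1 h2 h3 h4 h5 h6 h7 => stage3 hd2 hdel huv hnc hC1 hC5 h1 h2 h3 h4 h5 h6 h7
      have hF3' : ∀ b r, G.Adj v b → b ≠ u → G.Adj b r → ¬G.Adj v r → ¬G.Adj u r →
          r ≠ v → r ≠ u → ¬ ((G.deleteEdges {s(b,r)}).edist b r ≤ 3) :=
        fun b r h1 h2 h3 h4 h5 h6 h7 =>
          stage3 hd2 hdel huv.symm hncv hC1' hC5' h1 h2 h3 h4 h5 h6 h7
      have hC7a : ∀ a r, G.Adj u a → a ≠ v → G.Adj a r → ¬G.Adj u r → ¬G.Adj v r →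
          r ≠ u → r ≠ v → ∀ z, G.Adj z a → G.Adj z r → False := by
        intro a r h1 h2 h3 h4 h5 h6 h7 z hza hzr
        refine hF3 a r h1 h2 h3 h4 h5 h6 h7 ((edist_le_two_of
          (del_adj_of hza.symm (fun h => hzr.ne h.2) (fun h => h3.ne h.1))
          (del_adj_of hzr (fun h => hza.ne h.1) (fun h => hzr.ne h.1))).trans (by norm_num))
      have hC7a' : ∀ b r, G.Adj v b → b ≠ u → G.Adj b r → ¬G.Adj v r → ¬G.Adj u r →
          r ≠ v → r ≠ u → ∀ z, G.Adj z b → G.Adj z r → False := by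
        intro b r h1 h2 h3 h4 h5 h6 h7 z hzb hzr
        refine hF3' b r h1 h2 h3 h4 h5 h6 h7 ((edist_le_two_of
          (del_adj_of hzb.symm (fun h => hzr.ne h.2) (fun h => h3.ne h.1))
          (del_adj_of hzr (fun h => hzb.ne h.1) (fun h => hzr.ne h.1))).trans (by norm_num))
      have hC7b : ∀ a r, G.Adj u a → a ≠ v → G.Adj a r → ¬G.Adj u r → ¬G.Adj v r →
          r ≠ u → r ≠ v → ∀ w y, G.Adj a w → w ≠ r → G.Adj y w → G.Adj y r → y ≠ a → False := by
        intro a r h1 h2 h3 h4 h5 h6 h7 w y haw hwr hyw hyr hya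
        refine hF3 a r h1 h2 h3 h4 h5 h6 h7 (edist_le_three_of
          (del_adj_of haw (fun h => hwr h.2) (fun h => h3.ne h.1))
          (del_adj_of hyw.symm (fun h => haw.ne' h.1) (fun h => hwr h.1))
          (del_adj_of hyr (fun h => hya h.1) (fun h => hyr.ne h.1)))
      by_cases htri : ∃ x y z, G.Adj x y ∧ G.Adj y z ∧ G.Adj x z
      · obtain ⟨p, q, s, hpq, hqs, hps⟩ := htri
        have hpu : p ≠ u := tri_ne hnc hC4 hpq hqs hps
        have hqu : q ≠ u := tri_ne hnc hC4 hpq.symm hps hqs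
        have hpv : p ≠ v := tri_ne hncv hC4' hpq hqs hps
        have hqv : q ≠ v := tri_ne hncv hC4' hpq.symm hps hqs
        have hnup : ¬ G.Adj u p := tri_nadj hC1 hC4 hC7a hpq hqs hps hpv hqu hqv
        have hnuq : ¬ G.Adj u q := tri_nadj hC1 hC4 hC7a hpq.symm hps hqs hqv hpu hpv
        have hnvq : ¬ G.Adj v q := tri_nadj hC1' hC4' hC7a' hpq.symm hps hqs hqu hpv hpu
        obtain ⟨a2, hua2, ha2q⟩ := common_nbr hd2 (Ne.symm hqu) hnuq
        have ha2v : a2 ≠ v := fun h => hnvq (h ▸ ha2q)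
        have ha2p : p ≠ a2 := fun h => hnup (by rw [h]; exact hua2)
        have hlb : 3 ≤ (G.deleteEdges {s(p,q)}).edist p a2 := by
          refine three_le_edist_of ha2p ?_ ?_
          · intro h
            exact hC7a a2 q hua2 ha2v ha2q hnuq hnvq hqu hqv p (del_adj_dest h).1 hpq
          · intro z h1 h2
            have hzq : z ≠ q := fun hh => (del_adj_dest h1).2.1 ⟨rfl, hh⟩
            exact hC7b a2 q hua2 ha2v ha2q hnuq hnvq hqu hqv z p ((del_adj_dest h2).1.symm)
              hzq (del_adj_dest h1).1 hpq ha2p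
        have h33 : (G.deleteEdges {s(p,q)}).edist p q ≤ 3 :=
          (edist_le_two_of (del_adj_of hps (fun h => hqs.ne' h.2) (fun h => hpq.ne h.1))
            (del_adj_of hqs.symm (fun h => hps.ne' h.1) (fun h => hqs.ne' h.1))).trans
            (by norm_num)
        exact stage_final hd2 hdel hpq hps hqs.ne' hqs hps.ne' h33 hlb
      · rcases hcyc with ⟨x, y, h1, h2, h3⟩ | ⟨x, y, z, h1, h2, h3, h4, hc0y, hxz⟩
        · exact htri ⟨c0, x, y, h1, h2, h3.symm⟩
        · have h3path : (G.deleteEdges {s(c0,x)}).edist c0 x ≤ 3 :=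
            edist_le_three_of
              (del_adj_of h4.symm (fun h => hxz h.2.symm) (fun h => h1.ne h.1))
              (del_adj_of h3.symm (fun h => h4.ne h.1) (fun h => hxz h.1.symm))
              (del_adj_of h2.symm (fun h => hc0y h.1.symm) (fun h => h2.ne' h.1))
          have hlb : 3 ≤ (G.deleteEdges {s(c0,x)}).edist c0 x :=
            three_le_edist_of h1.ne (fun h => (del_adj_dest h).2.1 ⟨rfl, rfl⟩)
              (fun w' hw1 hw2 =>
                htri ⟨c0, w', x, (del_adj_dest hw1).1, (del_adj_dest hw2).1, h1⟩)
          exact stage_final hd2 hdel h1 h4.symm (Ne.symm hxz) h2 (Ne.symm hc0y) h3path hlb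
    · push_neg at hB
      obtain ⟨x, y, hxy, hxv, hxu, hyv, hyu⟩ := edge_avoiding hB hcyc
      exact stage_bridge hd2 hdel huv.symm hB hxy hxv hxu hyv hyu
  · push_neg at hA
    obtain ⟨x, y, hxy, hxu, hxv, hyu, hyv⟩ := edge_avoiding hA hcyc
    exact stage_bridge hd2 hdel huv hA hxy hxu hxv hyu hyv

end Key

section Final

variable {V : Type*} {G : SimpleGraph V}

private lemma cw_eq_three {u v z : V} (huv : G.Adj u v) (hvz : G.Adj v z) (hzu : G.Adj z u) :
    cycleWeight G s(u,v) = 3 := by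
  set p : G.Walk u u := Walk.cons huv (Walk.cons hvz (Walk.cons hzu Walk.nil)) with hp
  have hcyc : p.IsCycle := by
    refine ⟨⟨⟨?_⟩, ?_⟩, ?_⟩
    · simp [hp, Walk.edges_cons, Sym2.eq_iff]
      have h1 : u ≠ v := huv.ne
      have h2 : v ≠ z := hvz.ne
      have h3 : z ≠ u := hzu.ne
      tauto
    · simp [hp]
    · simp [hp]
      have h1 : u ≠ v := huv.ne
      have h2 : v ≠ z := hvz.ne
      have h3 : z ≠ u := hzu.ne
      tauto
  have hmem : s(u,v) ∈ p.edges := by simp [hp]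
  have hub : cycleWeight G s(u,v) ≤ 3 := by
    refine le_trans (iInf_le_of_le u (iInf_le_of_le p (iInf_le _ ⟨hcyc, hmem⟩))) ?_
    simp [hp]
  have hlb : 3 ≤ cycleWeight G s(u,v) := by
    refine le_iInf fun w => le_iInf fun q => le_iInf fun hq => ?_
    exact_mod_cast Nat.cast_le.mpr hq.1.three_le_length
  exact le_antisymm hub hlb

end Final

/-- Let `G` be a finite simple graph with at least four vertices,
diameter two, and girth at most four, such that for every edge `e` of `G` the graph
`G − e` does not have diameter three (a disconnected graph having infinite diameter).
Then every edge of `G` lies on a triangle, i.e., `w_G(e) = 3` for every edge `e`. -/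
theorem cycleWeight_eq_three {V : Type*} [Fintype V] (G : SimpleGraph V)
    (hcard : 4 ≤ Fintype.card V) (hG : G.Connected) (hdiam : G.diam = 2)
    (hgirth : G.egirth ≤ 4)
    (hdel : ∀ e ∈ G.edgeSet, (G.deleteEdges {e}).ediam ≠ 3) :
    ∀ e ∈ G.edgeSet, cycleWeight G e = 3 := by
  have hediam : G.ediam = 2 := by
    cases h : G.ediam with
    | top => rw [SimpleGraph.diam, h] at hdiam; simp at hdiam
    | coe n => rw [SimpleGraph.diam, h] at hdiam; simp at hdiam; simp [hdiam]
  have hd2 : ∀ x y, G.edist x y ≤ 2 := fun x y => hediam ▸ SimpleGraph.edist_le_ediam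
  intro e
  induction e using Sym2.ind with
  | _ u v =>
    intro he
    have huv : G.Adj u v := (G.mem_edgeSet).mp he
    obtain ⟨z, hz1, hz2⟩ := key_common hd2 hgirth hdel huv
    exact cw_eq_three huv hz2 hz1.symm
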